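/- Let $\Lambda \in \mathbb{S}^n_{++}$ and $D \in \mathbb{R}^{n\times n}$ be such that $\Lambda D$ and $\Lambda(I - D)$ are both symmetric positive semidefinite. Then $\langle Dh, \Lambda(I-D)h\rangle \ge 0$ for all $h \in \mathbb{R}^n$. -/

import Mathlib

open Matrix

lemma psd_cs {n : ℕ} {A : Matrix (Fin n) (Fin n) ℝ} (hA : A.PosSemidef)
    (u h : Fin n → ℝ) :
    (u ⬝ᵥ A *ᵥ h) ^ 2 ≤ (u ⬝ᵥ A *ᵥ u) * (h ⬝ᵥ A *ᵥ h) := by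
  have hsym : ∀ x y : Fin n → ℝ, x ⬝ᵥ A *ᵥ y = y ⬝ᵥ A *ᵥ x := by
    intro x y
    rw [dotProduct_mulVec, dotProduct_comm, ← mulVec_transpose]
    congr 1
    exact congrArg (· *ᵥ x) hA.1
  have key : ∀ t : ℝ, 0 ≤ (h ⬝ᵥ A *ᵥ h) * (t * t) + (2 * (u ⬝ᵥ A *ᵥ h)) * t + (u ⬝ᵥ A *ᵥ u) := by
    intro t
    have := hA.dotProduct_mulVec_nonneg (u + t • h)
    simp only [star_trivial, add_mulVec, mulVec_add, mulVec_smul, dotProduct_add,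
      add_dotProduct, dotProduct_smul, smul_dotProduct, smul_eq_mul] at this
    have h2 : h ⬝ᵥ A *ᵥ u = u ⬝ᵥ A *ᵥ h := hsym h u
    rw [h2] at this
    ring_nf at this ⊢
    linarith
  have hd := discrim_le_zero key
  rw [discrim] at hd
  nlinarith [hd]

theorem stmt14 (n : ℕ) (Λ D : Matrix (Fin n) (Fin n) ℝ)
    (hΛ : Λ.PosDef) (h1 : (Λ * D).PosSemidef) (h2 : (Λ * (1 - D)).PosSemidef) :
    ∀ h : Fin n → ℝ,
      0 ≤ dotProduct (D.mulVec h) ((Λ * (1 - D)).mulVec h) := by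
  intro h
  set A := Λ * D with hA
  set u := D *ᵥ h with hu
  have hΛu : Λ *ᵥ u = A *ᵥ h := by rw [hu, hA, mulVec_mulVec]
  -- target rewrite: Λ*(1-D) = Λ - A
  have hB : Λ * (1 - D) = Λ - A := by rw [hA, mul_sub, mul_one]
  rw [hB, sub_mulVec, dotProduct_sub]
  -- u ⬝ᵥ Λ *ᵥ h = h ⬝ᵥ A *ᵥ h
  have hΛsym : ∀ x y : Fin n → ℝ, x ⬝ᵥ Λ *ᵥ y = y ⬝ᵥ Λ *ᵥ x := by
    intro x y
    rw [dotProduct_mulVec, dotProduct_comm, ← mulVec_transpose]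
    congr 1
    exact congrArg (· *ᵥ x) hΛ.1
  have e1 : u ⬝ᵥ Λ *ᵥ h = h ⬝ᵥ A *ᵥ h := by
    rw [hΛsym u h, ← hΛu, hΛsym h u]
  have e2 : u ⬝ᵥ A *ᵥ h = u ⬝ᵥ Λ *ᵥ u := by rw [hΛu]
  rw [e1, e2]
  -- need: u ⬝ᵥ Λ *ᵥ u ≤ h ⬝ᵥ A *ᵥ h
  by_cases hu0 : u = 0
  · simp [hu0]
    have := h1.dotProduct_mulVec_nonneg h
    simpa using this
  · have hpos : 0 < u ⬝ᵥ Λ *ᵥ u := by simpa using hΛ.dotProduct_mulVec_pos hu0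
    have cs := psd_cs h1 u h
    have huAu : u ⬝ᵥ A *ᵥ u ≤ u ⬝ᵥ Λ *ᵥ u := by
      have := h2.dotProduct_mulVec_nonneg u
      simp only [star_trivial, hB, sub_mulVec, dotProduct_sub] at this
      linarith
    have : (u ⬝ᵥ Λ *ᵥ u) ^ 2 ≤ (u ⬝ᵥ Λ *ᵥ u) * (h ⬝ᵥ A *ᵥ h) := by
      calc (u ⬝ᵥ Λ *ᵥ u) ^ 2 = (u ⬝ᵥ A *ᵥ h) ^ 2 := by rw [e2]
        _ ≤ (u ⬝ᵥ A *ᵥ u) * (h ⬝ᵥ A *ᵥ h) := cs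
        _ ≤ (u ⬝ᵥ Λ *ᵥ u) * (h ⬝ᵥ A *ᵥ h) := by
            have hAh : 0 ≤ h ⬝ᵥ A *ᵥ h := by simpa using h1.dotProduct_mulVec_nonneg h
            exact mul_le_mul_of_nonneg_right huAu hAh
    nlinarith [this, hpos]
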